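/- Let X be a Hausdorff paracompact space admitting a fixed-point free continuous involution τ, and let q : X → X/τ be the quotient double covering. Then the ℤ/2-index of (X,τ) equals secat(q) − 1. -/

import Mathlib

open Metric Set

/-- A continuous local section of `p` over `U`. -/
def IsLocalSection {E B : Type*} [TopologicalSpace E] [TopologicalSpace B]
    (p : E → B) (U : Set B) : Prop :=
  ∃ s : U → E, Continuous s ∧ ∀ x : U, p (s x) = (x : B)

/-- The sectional category of a map `p : E → B`: the least number of open sets covering `B`,
over each of which `p` admits a continuous local section; `⊤` if no finite cover exists. -/
noncomputable def secat {E B : Type*} [TopologicalSpace E] [TopologicalSpace B]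
    (p : E → B) : ℕ∞ :=
  sInf {n : ℕ∞ | ∃ k : ℕ, n = (k : ℕ∞) ∧ ∃ U : Fin k → Set B,
    (∀ i, IsOpen (U i)) ∧ (⋃ i, U i) = Set.univ ∧ ∀ i, IsLocalSection p (U i)}

/-- A subset is contractible within the ambient space if its inclusion is nullhomotopic. -/
def ContractibleIn {X : Type*} [TopologicalSpace X] (U : Set X) : Prop :=
  ContinuousMap.Nullhomotopic (⟨(Subtype.val : U → X), continuous_subtype_val⟩ : C(U, X))

/-- Lusternik–Schnirelmann category: least number of open sets covering `X`, each
contractible within `X`. -/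
noncomputable def LScat (X : Type*) [TopologicalSpace X] : ℕ∞ :=
  sInf {n : ℕ∞ | ∃ k : ℕ, n = (k : ℕ∞) ∧ ∃ U : Fin k → Set X,
    (∀ i, IsOpen (U i)) ∧ (⋃ i, U i) = Set.univ ∧ ∀ i, ContractibleIn (U i)}

/-- Hurewicz fibration: the homotopy lifting property with respect to all spaces. -/
def IsHurewiczFibration {E B : Type*} [TopologicalSpace E] [TopologicalSpace B]
    (p : E → B) : Prop :=
  ∀ (Z : Type*) [TopologicalSpace Z] (H : Z × unitInterval → B) (h : Z → E),
    Continuous H → Continuous h → (∀ z, p (h z) = H (z, 0)) →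
    ∃ G : Z × unitInterval → E, Continuous G ∧ (∀ z, G (z, 0) = h z) ∧ ∀ w, p (G w) = H w

/-- The orbit relation of the action generated by a map `τ`. -/
def orbitRelOf {X : Type*} (τ : X → X) : X → X → Prop := fun x y => y = τ x

/-- Quotient of `X` by the (involutive) map `τ`, with the quotient topology. -/
abbrev InvolQuot {X : Type*} [TopologicalSpace X] (τ : X → X) : Type _ := Quot (orbitRelOf τ)

/-- The quotient map `X → X/τ`. -/
def involQuotMk {X : Type*} [TopologicalSpace X] (τ : X → X) : X → InvolQuot τ :=
  Quot.mk (orbitRelOf τ)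

/-- The ordered configuration space `F(Y,2)` of two distinct points of `Y`. -/
abbrev Conf2 (Y : Type*) [TopologicalSpace Y] : Type _ := {p : Y × Y // p.1 ≠ p.2}

/-- The swap involution `τ₂` on `F(Y,2)`. -/
def confSwap {Y : Type*} [TopologicalSpace Y] : Conf2 Y → Conf2 Y :=
  fun p => ⟨(p.1.2, p.1.1), Ne.symm p.2⟩

/-- The unordered configuration space `D(Y,2) = F(Y,2)/τ₂`. -/
abbrev UConf2 (Y : Type*) [TopologicalSpace Y] : Type _ := InvolQuot (confSwap (Y := Y))

/-- The quotient double covering `q^Y : F(Y,2) → D(Y,2)`. -/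
def confQuotMk (Y : Type*) [TopologicalSpace Y] : Conf2 Y → UConf2 Y :=
  involQuotMk confSwap

/-- The Borsuk–Ulam property for the triple `((X,τ);Y)`. -/
def BorsukUlamProperty (X : Type*) [TopologicalSpace X] (τ : X → X)
    (Y : Type*) [TopologicalSpace Y] : Prop :=
  ∀ f : X → Y, Continuous f → ∃ x : X, f (τ x) = f x

/-- The `m`-sphere as the unit sphere of `ℝ^{m+1}`. -/
abbrev Sph (m : ℕ) : Type := Metric.sphere (0 : EuclideanSpace ℝ (Fin (m + 1))) 1

/-- The antipodal involution on the sphere. -/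
noncomputable def antipodal (m : ℕ) : Sph m → Sph m := fun x => -x

/-- The smallest dimension of a Euclidean space into which `Y` embeds. -/
noncomputable def embDim (Y : Type*) [TopologicalSpace Y] : ℕ∞ :=
  sInf {n : ℕ∞ | ∃ k : ℕ, n = (k : ℕ∞) ∧
    ∃ e : Y → EuclideanSpace ℝ (Fin k), Topology.IsEmbedding e}

/-- The `ℤ/2`-index of `(X,τ)`: the least `n` such that there is a continuous map
`X → Sⁿ` which is equivariant for `τ` and the antipodal involution. -/
noncomputable def z2Index {X : Type*} [TopologicalSpace X] (τ : X → X) : ℕ∞ :=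
  sInf {n : ℕ∞ | ∃ k : ℕ, n = (k : ℕ∞) ∧
    ∃ g : X → Sph k, Continuous g ∧ ∀ x, g (τ x) = antipodal k (g x)}

section CW

/-- A (classical) CW-complex structure on a Hausdorff space `X`: a family of cells
with characteristic maps from closed disks, the images of the open disks partitioning `X`,
each attaching map sending the boundary sphere into cells of lower dimension, together with
closure finiteness (C) and the weak topology (W). -/
structure CWStructure (X : Type u) [TopologicalSpace X] : Type (u + 1) where
  /-- index type of the `n`-cells -/
  cell : ℕ → Type u
  /-- characteristic map of each `n`-cell -/
  map : (n : ℕ) → cell n → EuclideanSpace ℝ (Fin n) → X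
  continuousOn : ∀ n i, ContinuousOn (map n i) (closedBall 0 1)
  injOn : ∀ n i, Set.InjOn (map n i) (ball 0 1)
  partition : ∀ x : X, ∃! p : Σ n, cell n, x ∈ map p.1 p.2 '' ball 0 1
  mapsTo_boundary : ∀ n i, Set.MapsTo (map n i) (sphere 0 1)
    (⋃ (m : ℕ) (_ : m < n) (j : cell m), map m j '' closedBall 0 1)
  closureFinite : ∀ n i, {p : Σ m, cell m |
    (map p.1 p.2 '' ball 0 1 ∩ map n i '' closedBall 0 1).Nonempty}.Finite
  weakTopology : ∀ A : Set X,
    (∀ n i, IsClosed (A ∩ map n i '' closedBall 0 1)) → IsClosed A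

namespace CWStructure

variable {X : Type u} [TopologicalSpace X] (S : CWStructure X)

/-- The `n`-skeleton of a CW structure. -/
def skeleton (n : ℕ) : Set X :=
  ⋃ (m : ℕ) (_ : m ≤ n) (j : S.cell m), S.map m j '' closedBall 0 1

/-- The CW structure has dimension at most `d`. -/
def DimLE (d : ℕ) : Prop := ∀ n, d < n → IsEmpty (S.cell n)

/-- The CW structure has dimension exactly `d`. -/
def DimEq (d : ℕ) : Prop := S.DimLE d ∧ Nonempty (S.cell d)

/-- A self-map is cellular if it maps each skeleton into itself. -/
def Cellular (f : X → X) : Prop := ∀ n, Set.MapsTo f (S.skeleton n) (S.skeleton n)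

end CWStructure

/-- The homotopical dimension of `X` is at most `d`: `X` is homotopy equivalent to a
CW complex of dimension at most `d`. -/
def HDimLE (X : Type u) [TopologicalSpace X] (d : ℕ) : Prop :=
  ∃ (Z : Type u) (_ : TopologicalSpace Z) (S : CWStructure Z),
    S.DimLE d ∧ Nonempty (ContinuousMap.HomotopyEquiv Z X)

end CW

section Helpers
variable {X : Type*} [TopologicalSpace X] {τ : X → X}

lemma involQuotMk_tau (x : X) : involQuotMk τ (τ x) = involQuotMk τ x :=
  (Quot.sound (show orbitRelOf τ x (τ x) from rfl)).symm

lemma involQuotMk_eq_iff (hinv : Function.Involutive τ) {x y : X} :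
    involQuotMk τ x = involQuotMk τ y ↔ y = x ∨ y = τ x := by
  constructor
  · intro h
    have key : ∀ a b : X, Relation.EqvGen (orbitRelOf τ) a b → (b = a ∨ b = τ a) := by
      intro a b hab
      induction hab with
      | rel a b hab => exact Or.inr hab
      | refl a => exact Or.inl rfl
      | symm a b _ ih =>
        rcases ih with h1 | h1
        · exact Or.inl h1.symm
        · subst h1; exact Or.inr (hinv a).symm
      | trans a b c _ _ ih1 ih2 =>
        rcases ih1 with h1 | h1 <;> rcases ih2 with h2 | h2 <;> subst h2 <;> subst h1
        · exact Or.inl rfl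
        · exact Or.inr rfl
        · exact Or.inr rfl
        · exact Or.inl (hinv a)
    exact key x y (Quot.eq.mp h)
  · rintro (rfl | rfl)
    · rfl
    · exact (involQuotMk_tau x).symm

lemma continuous_involQuotMk : Continuous (involQuotMk τ) := continuous_quot_mk

lemma preimage_image_involQuotMk (hinv : Function.Involutive τ) (U : Set X) :
    involQuotMk τ ⁻¹' (involQuotMk τ '' U) = U ∪ τ ⁻¹' U := by
  ext x
  simp only [Set.mem_preimage, Set.mem_image, Set.mem_union]
  constructor
  · rintro ⟨u, hu, hq⟩
    rcases (involQuotMk_eq_iff hinv).mp hq.symm with rfl | rfl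
    · exact Or.inl hu
    · exact Or.inr (by simpa [hinv x] using hu)
  · rintro (hx | hx)
    · exact ⟨x, hx, rfl⟩
    · exact ⟨τ x, hx, involQuotMk_tau x⟩

lemma isOpenMap_involQuotMk (hc : Continuous τ) (hinv : Function.Involutive τ) :
    IsOpenMap (involQuotMk τ) := by
  intro U hU
  rw [isOpen_coinduced]
  rw [show Quot.mk (orbitRelOf τ) ⁻¹' (involQuotMk τ '' U) = U ∪ τ ⁻¹' U from
    preimage_image_involQuotMk hinv U]
  exact hU.union (hU.preimage hc)

end Helpers
section Helpers2
variable {X : Type*} [TopologicalSpace X] {τ : X → X}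

lemma isLocalSection_image (hc : Continuous τ) (hinv : Function.Involutive τ)
    {P : Set X} (hP : IsOpen P) (hinj : Set.InjOn (involQuotMk τ) P) :
    IsLocalSection (involQuotMk τ) (involQuotMk τ '' P) := by
  classical
  set q := involQuotMk τ with hq
  have hsel : ∀ v : ↥(q '' P), ∃ x, x ∈ P ∧ q x = v := by
    rintro ⟨v, x, hx, rfl⟩
    exact ⟨x, hx, rfl⟩
  choose s hsP hsq using hsel
  refine ⟨s, ?_, hsq⟩
  rw [continuous_iff_continuousAt]
  intro v
  rw [ContinuousAt]
  intro O hO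
  rcases mem_nhds_iff.mp hO with ⟨O', hO'sub, hO'open, hvO'⟩
  have hNopen : IsOpen (q '' (O' ∩ P)) := isOpenMap_involQuotMk hc hinv _ (hO'open.inter hP)
  have hvN : (v : InvolQuot τ) ∈ q '' (O' ∩ P) := ⟨s v, ⟨hvO', hsP v⟩, hsq v⟩
  have hmem : (Subtype.val ⁻¹' (q '' (O' ∩ P)) : Set ↥(q '' P)) ∈ nhds v :=
    (hNopen.preimage continuous_subtype_val).mem_nhds hvN
  rw [Filter.mem_map]
  refine Filter.mem_of_superset hmem ?_
  rintro w hw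
  rcases hw with ⟨x, ⟨hxO, hxP⟩, hqx⟩
  have : s w = x := hinj (hsP w) hxP (by rw [hsq w, hqx])
  show s w ∈ O
  rw [this]
  exact hO'sub hxO

end Helpers2
section DirectionB
variable {X : Type*} [TopologicalSpace X] {τ : X → X}

/-- Direction B: from an equivariant map to the m-sphere, build a cover of the quotient by
m+1 open sets with local sections. -/
lemma cover_of_map (hc : Continuous τ) (hinv : Function.Involutive τ) {m : ℕ}
    (g : X → Sph m) (hg : Continuous g) (heq : ∀ x, g (τ x) = antipodal m (g x)) :
    ∃ U : Fin (m + 1) → Set (InvolQuot τ), (∀ i, IsOpen (U i)) ∧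
      (⋃ i, U i) = Set.univ ∧ ∀ i, IsLocalSection (involQuotMk τ) (U i) := by
  set q := involQuotMk τ with hqdef
  set P : Fin (m + 1) → Set X :=
    fun i => {x | 0 < (g x : EuclideanSpace ℝ (Fin (m + 1))) i} with hPdef
  have hgc : ∀ i, Continuous fun x => (g x : EuclideanSpace ℝ (Fin (m + 1))) i :=
    fun i => (EuclideanSpace.proj (𝕜 := ℝ) i).continuous.comp (continuous_subtype_val.comp hg)
  have hPopen : ∀ i, IsOpen (P i) := fun i => isOpen_lt continuous_const (hgc i)
  have hgneg : ∀ x i, (g (τ x) : EuclideanSpace ℝ (Fin (m + 1))) i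
      = -(g x : EuclideanSpace ℝ (Fin (m + 1))) i := by
    intro x i
    rw [heq x]
    show ((-(g x) : Sph m) : EuclideanSpace ℝ (Fin (m + 1))) i = _
    rw [coe_neg_sphere]
    rfl
  refine ⟨fun i => q '' P i, fun i => isOpenMap_involQuotMk hc hinv _ (hPopen i), ?_, ?_⟩
  · ext v
    simp only [Set.mem_iUnion, Set.mem_univ, iff_true]
    obtain ⟨x, rfl⟩ := Quot.exists_rep v
    have hne : (g x : EuclideanSpace ℝ (Fin (m + 1))) ≠ 0 := ne_zero_of_mem_unit_sphere _
    have : ∃ i, (g x : EuclideanSpace ℝ (Fin (m + 1))) i ≠ 0 := by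
      by_contra hcon
      push_neg at hcon
      exact hne (PiLp.ext fun i => by simp [hcon i])
    obtain ⟨i, hi⟩ := this
    rcases Ne.lt_or_gt hi with hlt | hlt
    · refine ⟨i, τ x, ?_, involQuotMk_tau x⟩
      show 0 < (g (τ x) : EuclideanSpace ℝ (Fin (m + 1))) i
      rw [hgneg]
      linarith
    · exact ⟨i, x, hlt, rfl⟩
  · intro i
    refine isLocalSection_image hc hinv (hPopen i) ?_
    intro x hx y hy hxy
    rcases (involQuotMk_eq_iff hinv).mp hxy with rfl | rfl
    · rfl
    · exfalso
      have h1 : 0 < (g x : EuclideanSpace ℝ (Fin (m + 1))) i := hx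
      have h2 : 0 < (g (τ x) : EuclideanSpace ℝ (Fin (m + 1))) i := hy
      rw [hgneg] at h2
      linarith

end DirectionB
section DirectionA
variable {X : Type*} [TopologicalSpace X] {τ : X → X}

/-- Direction A: from a cover of the quotient by m+1 open sets admitting local sections,
build an equivariant map to the m-sphere. -/
lemma map_of_cover [T2Space X] [ParacompactSpace X]
    (hc : Continuous τ) (hinv : Function.Involutive τ) (hfree : ∀ x, τ x ≠ x)
    {m : ℕ} (U : Fin (m + 1) → Set (InvolQuot τ)) (hUopen : ∀ i, IsOpen (U i))
    (hUcov : (⋃ i, U i) = Set.univ) (hUsec : ∀ i, IsLocalSection (involQuotMk τ) (U i)) :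
    ∃ g : X → Sph m, Continuous g ∧ ∀ x, g (τ x) = antipodal m (g x) := by
  classical
  set q := involQuotMk τ with hqdef
  set W : Fin (m + 1) → Set X := fun i => q ⁻¹' U i with hWdef
  have hWopen : ∀ i, IsOpen (W i) := fun i => (hUopen i).preimage continuous_involQuotMk
  have hWcov : (⋃ i, W i) = Set.univ := by
    rw [hWdef, ← Set.preimage_iUnion, hUcov, Set.preimage_univ]
  have hWtau : ∀ i x, τ x ∈ W i ↔ x ∈ W i := by
    intro i x
    simp only [hWdef, Set.mem_preimage, hqdef, involQuotMk_tau]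
  choose s hscont hsval using hUsec
  set c : ∀ i, ↥(W i) → X := fun i w => s i ⟨q w.1, w.2⟩ with hcdef
  have hccont : ∀ i, Continuous (c i) := fun i =>
    (hscont i).comp (Continuous.subtype_mk
      (continuous_involQuotMk.comp continuous_subtype_val) _)
  have hcq : ∀ i (w : ↥(W i)), q (c i w) = q w.1 := fun i w => hsval i _
  set A : ∀ _ : Fin (m + 1), Set X := fun i => Subtype.val '' {w : ↥(W i) | c i w = w.1}
    with hAdef
  set B : ∀ _ : Fin (m + 1), Set X := fun i => Subtype.val '' {w : ↥(W i) | τ (c i w) = w.1}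
    with hBdef
  have hmemA : ∀ i x, x ∈ A i ↔ ∃ hx : x ∈ W i, c i ⟨x, hx⟩ = x := by
    intro i x
    constructor
    · rintro ⟨⟨y, hy⟩, hw, rfl⟩
      exact ⟨hy, hw⟩
    · rintro ⟨hx, hcx⟩
      exact ⟨⟨x, hx⟩, hcx, rfl⟩
  have hmemB : ∀ i x, x ∈ B i ↔ ∃ hx : x ∈ W i, τ (c i ⟨x, hx⟩) = x := by
    intro i x
    constructor
    · rintro ⟨⟨y, hy⟩, hw, rfl⟩
      exact ⟨hy, hw⟩
    · rintro ⟨hx, hcx⟩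
      exact ⟨⟨x, hx⟩, hcx, rfl⟩
  have hAsubW : ∀ i, A i ⊆ W i := fun i x hx => ((hmemA i x).mp hx).fst
  have hBsubW : ∀ i, B i ⊆ W i := fun i x hx => ((hmemB i x).mp hx).fst
  have hdisj : ∀ i x, x ∈ A i → x ∈ B i → False := by
    intro i x hxA hxB
    obtain ⟨h1, e1⟩ := (hmemA i x).mp hxA
    obtain ⟨h2, e2⟩ := (hmemB i x).mp hxB
    have e1' : c i ⟨x, h2⟩ = x := e1
    rw [e1'] at e2
    exact hfree x e2
  have hABW : ∀ i x, x ∈ W i → x ∈ A i ∨ x ∈ B i := by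
    intro i x hx
    have hq' := hcq i ⟨x, hx⟩
    rcases (involQuotMk_eq_iff hinv).mp hq' with h1 | h1
    · exact Or.inl ((hmemA i x).mpr ⟨hx, h1.symm⟩)
    · exact Or.inr ((hmemB i x).mpr ⟨hx, h1.symm⟩)
  -- openness of A and B
  have hSAclosed : ∀ i, IsClosed {w : ↥(W i) | c i w = w.1} := fun i =>
    isClosed_eq (hccont i) continuous_subtype_val
  have hSBclosed : ∀ i, IsClosed {w : ↥(W i) | τ (c i w) = w.1} := fun i =>
    isClosed_eq (hc.comp (hccont i)) continuous_subtype_val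
  have hScompl : ∀ i, {w : ↥(W i) | c i w = w.1} = {w : ↥(W i) | τ (c i w) = w.1}ᶜ := by
    intro i
    ext w
    simp only [Set.mem_setOf_eq, Set.mem_compl_iff]
    constructor
    · intro h1 h2
      exact hdisj i w.1 ((hmemA i w.1).mpr ⟨w.2, h1⟩) ((hmemB i w.1).mpr ⟨w.2, h2⟩)
    · intro h2
      rcases hABW i w.1 w.2 with hA | hB
      · exact ((hmemA i w.1).mp hA).snd
      · exact absurd ((hmemB i w.1).mp hB).snd h2
  have hAopen : ∀ i, IsOpen (A i) := by
    intro i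
    apply (hWopen i).isOpenMap_subtype_val
    rw [hScompl i]
    exact (hSBclosed i).isOpen_compl
  have hBopen : ∀ i, IsOpen (B i) := by
    intro i
    apply (hWopen i).isOpenMap_subtype_val
    have : {w : ↥(W i) | τ (c i w) = w.1} = {w : ↥(W i) | c i w = w.1}ᶜ := by
      rw [hScompl i, compl_compl]
    rw [this]
    exact (hSAclosed i).isOpen_compl
  -- partition of unity
  obtain ⟨f, hfsub⟩ := PartitionOfUnity.exists_isSubordinate isClosed_univ W hWopen
    (by rw [hWcov])
  set μ : Fin (m + 1) → X → ℝ := fun i x => f i x + f i (τ x) with hμdef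
  have hμcont : ∀ i, Continuous (μ i) := fun i =>
    ((f i).continuous).add ((f i).continuous.comp hc)
  have hμtau : ∀ i x, μ i (τ x) = μ i x := by
    intro i x
    simp only [hμdef, hinv x]
    exact add_comm _ _
  have hμsuppW : ∀ i, tsupport (μ i) ⊆ W i := by
    intro i
    have h1 : tsupport (μ i) ⊆ tsupport (f i) ∪ τ ⁻¹' (tsupport (f i)) := by
      apply closure_minimal ?_ ((isClosed_tsupport _).union
        ((isClosed_tsupport _).preimage hc))
      intro x hx
      by_contra hcon
      simp only [Set.mem_union, Set.mem_preimage, not_or] at hcon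
      apply hx
      show f i x + f i (τ x) = 0
      rw [image_eq_zero_of_notMem_tsupport hcon.1, image_eq_zero_of_notMem_tsupport hcon.2,
        add_zero]
    refine h1.trans (Set.union_subset (hfsub i) ?_)
    intro x hx
    exact (hWtau i x).mp (hfsub i hx)
  have hpos : ∀ x, ∃ i, 0 < μ i x := by
    intro x
    obtain ⟨i, hi⟩ := f.exists_pos (Set.mem_univ x)
    exact ⟨i, lt_of_lt_of_le hi (le_add_of_nonneg_right (f.nonneg i (τ x)))⟩
  -- the signed functions
  set h : Fin (m + 1) → X → ℝ :=
    fun i x => if x ∈ A i then μ i x else if x ∈ B i then -(μ i x) else 0 with hhdef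
  have hhA : ∀ i x, x ∈ A i → h i x = μ i x := by
    intro i x hx
    simp only [hhdef, if_pos hx]
  have hhB : ∀ i x, x ∈ B i → h i x = -(μ i x) := by
    intro i x hx
    simp only [hhdef]
    rw [if_neg (fun hA => hdisj i x hA hx), if_pos hx]
  have hh0 : ∀ i x, x ∉ W i → h i x = 0 := by
    intro i x hx
    simp only [hhdef]
    rw [if_neg (fun hA => hx (hAsubW i hA)), if_neg (fun hB => hx (hBsubW i hB))]
  have hhμ0 : ∀ i x, μ i x = 0 → h i x = 0 := by
    intro i x hx
    simp only [hhdef]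
    split_ifs <;> simp [hx]
  have hhcont : ∀ i, Continuous (h i) := by
    intro i
    rw [continuous_iff_continuousAt]
    intro x
    by_cases hxA : x ∈ A i
    · exact ((hμcont i).continuousAt).congr (Filter.eventuallyEq_of_mem
        ((hAopen i).mem_nhds hxA) (fun y hy => (hhA i y hy).symm))
    by_cases hxB : x ∈ B i
    · exact (((hμcont i).neg).continuousAt).congr (Filter.eventuallyEq_of_mem
        ((hBopen i).mem_nhds hxB) (fun y hy => (hhB i y hy).symm))
    · have hxW : x ∉ W i := fun hW => (hABW i x hW).elim hxA hxB
      have hxs : x ∈ (tsupport (μ i))ᶜ := fun hmem => hxW (hμsuppW i hmem)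
      exact ((continuous_const : Continuous fun _ : X => (0:ℝ)).continuousAt).congr
        (Filter.eventuallyEq_of_mem ((isClosed_tsupport _).isOpen_compl.mem_nhds hxs)
          (fun y hy => (hhμ0 i y (image_eq_zero_of_notMem_tsupport hy)).symm))
  have hτA : ∀ i x, x ∈ A i → τ x ∈ B i := by
    intro i x hx
    obtain ⟨hxW, e⟩ := (hmemA i x).mp hx
    have hτW : τ x ∈ W i := (hWtau i x).mpr hxW
    refine (hmemB i (τ x)).mpr ⟨hτW, ?_⟩
    have key : c i ⟨τ x, hτW⟩ = c i ⟨x, hxW⟩ := by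
      show s i ⟨q (τ x), hτW⟩ = s i ⟨q x, hxW⟩
      exact congrArg (s i) (Subtype.ext (involQuotMk_tau x))
    rw [key, e]
  have hτB : ∀ i x, x ∈ B i → τ x ∈ A i := by
    intro i x hx
    obtain ⟨hxW, e⟩ := (hmemB i x).mp hx
    have hτW : τ x ∈ W i := (hWtau i x).mpr hxW
    refine (hmemA i (τ x)).mpr ⟨hτW, ?_⟩
    have key : c i ⟨τ x, hτW⟩ = c i ⟨x, hxW⟩ := by
      show s i ⟨q (τ x), hτW⟩ = s i ⟨q x, hxW⟩
      exact congrArg (s i) (Subtype.ext (involQuotMk_tau x))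
    rw [key]
    have : c i ⟨x, hxW⟩ = τ (τ (c i ⟨x, hxW⟩)) := (hinv _).symm
    rw [this, e]
  have hhtau : ∀ i x, h i (τ x) = -(h i x) := by
    intro i x
    by_cases hxA : x ∈ A i
    · rw [hhB i _ (hτA i x hxA), hμtau, hhA i x hxA]
    by_cases hxB : x ∈ B i
    · rw [hhA i _ (hτB i x hxB), hμtau, hhB i x hxB, neg_neg]
    · have hxW : x ∉ W i := fun hW => (hABW i x hW).elim hxA hxB
      have hτW : τ x ∉ W i := fun hW' => hxW ((hWtau i x).mp hW')
      rw [hh0 i _ hτW, hh0 i x hxW, neg_zero]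
  -- assemble the map to the sphere
  set g0 : X → EuclideanSpace ℝ (Fin (m + 1)) :=
    fun x => (EuclideanSpace.equiv (Fin (m + 1)) ℝ).symm (fun i => h i x) with hg0def
  have hg0cont : Continuous g0 :=
    (EuclideanSpace.equiv (Fin (m + 1)) ℝ).symm.continuous.comp
      (continuous_pi fun i => hhcont i)
  have hg0coord : ∀ x i, g0 x i = h i x := fun _ _ => rfl
  have hg0ne : ∀ x, g0 x ≠ 0 := by
    intro x hx0
    obtain ⟨i, hi⟩ := hpos x
    have hxW : x ∈ W i := hμsuppW i (subset_closure (Function.mem_support.mpr hi.ne'))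
    have hcoord : h i x ≠ 0 := by
      rcases hABW i x hxW with hA | hB
      · rw [hhA i x hA]; exact hi.ne'
      · rw [hhB i x hB]; exact neg_ne_zero.mpr hi.ne'
    apply hcoord
    have h1 : g0 x i = h i x := rfl
    rw [← h1, hx0]
    rfl
  have hg0tau : ∀ x, g0 (τ x) = -(g0 x) := by
    intro x
    refine PiLp.ext fun i => ?_
    show h i (τ x) = -(g0 x) i
    rw [hhtau]
    rfl
  have hnorm_ne : ∀ x, ‖g0 x‖ ≠ 0 := fun x => norm_ne_zero_iff.mpr (hg0ne x)
  refine ⟨fun x => ⟨‖g0 x‖⁻¹ • g0 x, mem_sphere_zero_iff_norm.mpr ?_⟩, ?_, ?_⟩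
  · rw [norm_smul, norm_inv, norm_norm, inv_mul_cancel₀ (hnorm_ne _)]
  · exact Continuous.subtype_mk (((hg0cont.norm).inv₀ hnorm_ne).smul hg0cont) _
  · intro x
    apply Subtype.ext
    show ‖g0 (τ x)‖⁻¹ • g0 (τ x) = _
    rw [show antipodal m _ = -(⟨‖g0 x‖⁻¹ • g0 x, _⟩ : Sph m) from rfl, coe_neg_sphere]
    rw [hg0tau, norm_neg, smul_neg]

end DirectionA
/-- for a Hausdorff paracompact space `X` with free involution `τ`, the
`ℤ/2`-index of `(X,τ)` equals `secat (q : X → X/τ) − 1`. -/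
theorem stmt_19 {X : Type*} [TopologicalSpace X] [T2Space X] [ParacompactSpace X]
    (τ : X → X) (hτc : Continuous τ) (hτinv : Function.Involutive τ)
    (hτfree : ∀ x, τ x ≠ x) :
    z2Index τ = secat (involQuotMk τ) - 1 := by
  classical
  by_cases hX : Nonempty X
  · set Sset := {n : ℕ∞ | ∃ k : ℕ, n = (k : ℕ∞) ∧ ∃ U : Fin k → Set (InvolQuot τ),
      (∀ i, IsOpen (U i)) ∧ (⋃ i, U i) = Set.univ ∧
      ∀ i, IsLocalSection (involQuotMk τ) (U i)} with hSdef
    set Zset := {n : ℕ∞ | ∃ k : ℕ, n = (k : ℕ∞) ∧ ∃ g : X → Sph k,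
      Continuous g ∧ ∀ x, g (τ x) = antipodal k (g x)} with hZdef
    have hsecat : secat (involQuotMk τ) = sInf Sset := rfl
    have hz2 : z2Index τ = sInf Zset := rfl
    have key1 : ∀ n : ℕ, (n : ℕ∞) ∈ Zset → ((n + 1 : ℕ) : ℕ∞) ∈ Sset := by
      rintro n ⟨k, hk, g, hgc, hge⟩
      have hkn : n = k := by exact_mod_cast hk
      subst hkn
      obtain ⟨U, h1, h2, h3⟩ := cover_of_map hτc hτinv g hgc hge
      exact ⟨n + 1, rfl, U, h1, h2, h3⟩
    have key2 : ∀ k : ℕ, (k : ℕ∞) ∈ Sset → ∃ m : ℕ, k = m + 1 ∧ (m : ℕ∞) ∈ Zset := by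
      rintro k ⟨k', hk', U, h1, h2, h3⟩
      have hkk : k = k' := by exact_mod_cast hk'
      subst hkk
      cases k with
      | zero =>
        exfalso
        obtain ⟨x⟩ := hX
        have hmem : involQuotMk τ x ∈ ⋃ i, U i := h2 ▸ Set.mem_univ _
        simp at hmem
      | succ m =>
        obtain ⟨g, hgc, hge⟩ := map_of_cover hτc hτinv hτfree U h1 h2 h3
        exact ⟨m, rfl, m, rfl, g, hgc, hge⟩
    have heq : sInf Sset = sInf Zset + 1 := by
      apply le_antisymm
      · rcases Set.eq_empty_or_nonempty Zset with hne | hne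
        · have hzt : sInf Zset = ⊤ := by rw [hne, sInf_empty]
          rw [hzt]
          simp
        · have hmem := csInf_mem hne
          obtain ⟨n, hn, -⟩ := id hmem
          have h1 := key1 n (by rw [← hn]; exact hmem)
          calc sInf Sset ≤ ((n + 1 : ℕ) : ℕ∞) := sInf_le h1
          _ = sInf Zset + 1 := by rw [hn]; push_cast; rfl
      · rcases Set.eq_empty_or_nonempty Sset with hne | hne
        · have hst : sInf Sset = ⊤ := by rw [hne, sInf_empty]
          rw [hst]
          exact le_top
        · have hmem := csInf_mem hne
          obtain ⟨k, hk, -⟩ := id hmem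
          obtain ⟨m, hm, hmZ⟩ := key2 k (by rw [← hk]; exact hmem)
          have hle : sInf Zset ≤ (m : ℕ∞) := sInf_le hmZ
          calc sInf Zset + 1 ≤ (m : ℕ∞) + 1 := add_le_add_left hle 1
          _ = ((m + 1 : ℕ) : ℕ∞) := by push_cast; rfl
          _ = (k : ℕ∞) := by rw [hm]
          _ = sInf Sset := hk.symm
    rw [hz2, hsecat, heq]
    exact ((ENat.addLECancellable_of_ne_top (by simp)).add_tsub_cancel_right).symm
  · have hXe : IsEmpty X := not_nonempty_iff.mp hX
    have hQe : IsEmpty (InvolQuot τ) := ⟨fun v => by obtain ⟨x, -⟩ := Quot.exists_rep v; exact hXe.elim x⟩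
    have hz : z2Index τ = 0 := by
      apply le_antisymm _ zero_le
      apply sInf_le
      refine ⟨0, rfl, fun x => hXe.elim x, ?_, fun x => hXe.elim x⟩
      exact continuous_iff_continuousAt.mpr (fun x => hXe.elim x)
    have hs : secat (involQuotMk τ) = 0 := by
      apply le_antisymm _ zero_le
      apply sInf_le
      refine ⟨0, rfl, fun i => i.elim0, fun i => i.elim0, ?_, fun i => i.elim0⟩
      ext v
      exact hQe.elim v
    rw [hz, hs]
    exact (zero_tsub 1).symm
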